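/- Let W be a real random variable with E[W] = 0, E[W²] ≥ C₀ > 0, and moment generating function bound E[e^{tW}] ≤ e^{C₁ t²/2} for all real t. Then P{W² ≥ C₀/2} ≥ 1/(16 e^{2C₁/C₀}). -/

import Mathlib

open MeasureTheory ProbabilityTheory Real

lemma sq_le_exp_add_exp_neg (x : ℝ) : x ^ 2 ≤ Real.exp x + Real.exp (-x) := by
  have key : ∀ y : ℝ, 0 ≤ y → y ^ 2 ≤ Real.exp y + Real.exp (-y) := by
    intro y hy
    have h1 : 1 + y + y ^ 2 / 2 + y ^ 3 / 6 ≤ Real.exp y := by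
      have := Real.sum_le_exp_of_nonneg hy 4
      simp [Finset.sum_range_succ, Nat.factorial] at this
      linarith
    have h2 : 1 - y ≤ Real.exp (-y) := Real.one_sub_le_exp_neg y
    nlinarith [mul_nonneg hy (sq_nonneg (y - 2)), sq_nonneg (y - 2)]
  rcases le_total 0 x with hx | hx
  · exact key x hx
  · have := key (-x) (by linarith); rw [neg_neg] at this; linarith

theorem stmt2 {Ω : Type*} [MeasurableSpace Ω] (μ : Measure Ω) [IsProbabilityMeasure μ]
    (W : Ω → ℝ) (C₀ C₁ : ℝ) (hC₀ : 0 < C₀) (hC₁ : 0 < C₁)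
    (hmeas : Measurable W)
    (hint : ∀ t : ℝ, Integrable (fun ω => Real.exp (t * W ω)) μ)
    (hmean : ∫ ω, W ω ∂μ = 0)
    (hvar : C₀ ≤ ∫ ω, (W ω) ^ 2 ∂μ)
    (hmgf : ∀ t : ℝ, ∫ ω, Real.exp (t * W ω) ∂μ ≤ Real.exp (C₁ * t ^ 2 / 2)) :
    ENNReal.ofReal (1 / (16 * Real.exp (2 * C₁ / C₀))) ≤ μ {ω | C₀ / 2 ≤ (W ω) ^ 2} := by
  set A : Set Ω := {ω | C₀ / 2 ≤ (W ω) ^ 2} with hA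
  have hAmeas : MeasurableSet A := measurableSet_le measurable_const (hmeas.pow_const 2)
  set E : ℝ := Real.exp (2 * C₁ / C₀) with hE
  have hEpos : 0 < E := Real.exp_pos _
  have hE1 : 1 ≤ E := Real.one_le_exp (by positivity)
  set t : ℝ := 1 / Real.sqrt C₀ with ht
  have hsqrt : 0 < Real.sqrt C₀ := Real.sqrt_pos.2 hC₀
  have ht2 : t ^ 2 = 1 / C₀ := by
    rw [ht, div_pow, Real.sq_sqrt hC₀.le]; norm_num
  -- pointwise bound on W^4
  have hptW4 : ∀ ω, (W ω) ^ 4 ≤ C₀ ^ 2 *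
      (Real.exp (2 * (t * W ω)) + 2 + Real.exp (-(2 * (t * W ω)))) := by
    intro ω
    have h1 : (t * W ω) ^ 2 ≤ Real.exp (t * W ω) + Real.exp (-(t * W ω)) :=
      sq_le_exp_add_exp_neg _
    have h2 : ((t * W ω) ^ 2) ^ 2 ≤ (Real.exp (t * W ω) + Real.exp (-(t * W ω))) ^ 2 :=
      pow_le_pow_left₀ (sq_nonneg _) h1 2
    have h3 : (Real.exp (t * W ω) + Real.exp (-(t * W ω))) ^ 2
        = Real.exp (2 * (t * W ω)) + 2 + Real.exp (-(2 * (t * W ω))) := by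
      have e1 : Real.exp (t * W ω) ^ 2 = Real.exp (2 * (t * W ω)) := by
        rw [← Real.exp_nat_mul]; norm_num
      have e2 : Real.exp (-(t * W ω)) ^ 2 = Real.exp (-(2 * (t * W ω))) := by
        rw [← Real.exp_nat_mul]; congr 1; push_cast; ring
      have e3 : Real.exp (t * W ω) * Real.exp (-(t * W ω)) = 1 := by
        rw [← Real.exp_add]; simp
      rw [add_sq, e1, e2, mul_assoc, e3, mul_one]
    have ht4 : t ^ 4 = 1 / C₀ ^ 2 := by
      have h : t ^ 4 = (t ^ 2) ^ 2 := by ring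
      rw [h, ht2, div_pow]; norm_num
    have h5 : ((t * W ω) ^ 2) ^ 2 = 1 / C₀ ^ 2 * (W ω) ^ 4 := by
      rw [← ht4]; ring
    rw [h3, h5] at h2
    have hC2 : (0:ℝ) < C₀ ^ 2 := by positivity
    calc (W ω) ^ 4 = C₀ ^ 2 * (1 / C₀ ^ 2 * (W ω) ^ 4) := by
          field_simp
      _ ≤ _ := mul_le_mul_of_nonneg_left h2 (by positivity)
  -- integrability
  have h1' : Integrable (fun ω => Real.exp (2 * (t * W ω))) μ := by
    simpa [mul_assoc] using hint (2 * t)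
  have h2' : Integrable (fun ω => Real.exp (-(2 * (t * W ω)))) μ := by
    simpa [mul_assoc, neg_mul] using hint (-(2 * t))
  have hint2t : Integrable (fun ω => Real.exp (2 * (t * W ω)) + 2
      + Real.exp (-(2 * (t * W ω)))) μ :=
    (h1'.add (integrable_const 2)).add h2'
  have hintW4 : Integrable (fun ω => (W ω) ^ 4) μ := by
    refine Integrable.mono' (hint2t.const_mul (C₀ ^ 2)) ((hmeas.pow_const 4).aestronglyMeasurable) ?_
    filter_upwards with ω
    rw [Real.norm_eq_abs, abs_of_nonneg (by positivity)]
    exact hptW4 ω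
  have hintW2 : Integrable (fun ω => (W ω) ^ 2) μ := by
    have h1 : Integrable (fun ω => Real.exp (W ω) + Real.exp (-W ω)) μ := by
      have := (hint 1).add (hint (-1))
      exact this.congr (Filter.Eventually.of_forall fun ω => by simp)
    refine Integrable.mono' h1 ((hmeas.pow_const 2).aestronglyMeasurable) ?_
    filter_upwards with ω
    rw [Real.norm_eq_abs, abs_of_nonneg (by positivity)]
    exact sq_le_exp_add_exp_neg _
  -- bound on E[W^4]
  have hEW4 : ∫ ω, (W ω) ^ 4 ∂μ ≤ 4 * C₀ ^ 2 * E := by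
    have step1 : ∫ ω, (W ω) ^ 4 ∂μ ≤ C₀ ^ 2 *
        ∫ ω, (Real.exp (2 * (t * W ω)) + 2 + Real.exp (-(2 * (t * W ω)))) ∂μ := by
      rw [← integral_const_mul]
      exact integral_mono hintW4 (hint2t.const_mul _) hptW4
    have hargpos : C₁ * (2 * t) ^ 2 / 2 = 2 * C₁ / C₀ := by
      have h : (2 * t) ^ 2 = 4 * t ^ 2 := by ring
      rw [h, ht2]; field_simp; ring
    have hargneg : C₁ * (-(2 * t)) ^ 2 / 2 = 2 * C₁ / C₀ := by
      have h : (-(2 * t)) ^ 2 = 4 * t ^ 2 := by ring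
      rw [h, ht2]; field_simp; ring
    have hmgfpos : ∫ ω, Real.exp (2 * (t * W ω)) ∂μ ≤ E := by
      have h := hmgf (2 * t); rw [hargpos] at h
      calc ∫ ω, Real.exp (2 * (t * W ω)) ∂μ
          = ∫ ω, Real.exp ((2 * t) * W ω) ∂μ := by simp [mul_assoc]
        _ ≤ E := h
    have hmgfneg : ∫ ω, Real.exp (-(2 * (t * W ω))) ∂μ ≤ E := by
      have h := hmgf (-(2 * t)); rw [hargneg] at h
      calc ∫ ω, Real.exp (-(2 * (t * W ω))) ∂μ
          = ∫ ω, Real.exp ((-(2 * t)) * W ω) ∂μ := by simp [mul_assoc, neg_mul]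
        _ ≤ E := h
    have hsum : ∫ ω, (Real.exp (2 * (t * W ω)) + 2 + Real.exp (-(2 * (t * W ω)))) ∂μ
        ≤ E + 2 + E := by
      have hadd1 : Integrable (fun ω => Real.exp (2 * (t * W ω)) + 2) μ :=
        h1'.add (integrable_const 2)
      rw [integral_add hadd1 h2', integral_add h1' (integrable_const 2)]
      simp only [integral_const, measure_univ, probReal_univ, ENNReal.toReal_one, smul_eq_mul, one_mul]
      gcongr
    calc ∫ ω, (W ω) ^ 4 ∂μ ≤ C₀ ^ 2 * (E + 2 + E) :=
          le_trans step1 (mul_le_mul_of_nonneg_left hsum (by positivity))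
      _ ≤ C₀ ^ 2 * (4 * E) := mul_le_mul_of_nonneg_left (by nlinarith) (by positivity)
      _ = 4 * C₀ ^ 2 * E := by ring
  -- lower bound on E[W^2 ; A]
  set f : Ω → ℝ := A.indicator (fun ω => (W ω) ^ 2) with hf
  have hfint : Integrable f μ := hintW2.indicator hAmeas
  have hlow : C₀ / 2 ≤ ∫ ω, f ω ∂μ := by
    have hpt : ∀ ω, (W ω) ^ 2 ≤ f ω + C₀ / 2 := by
      intro ω
      by_cases hω : ω ∈ A
      · have h := Set.indicator_of_mem hω (fun ω => (W ω) ^ 2)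
        rw [hf, h]; linarith
      · have h0 := Set.indicator_of_notMem hω (fun ω => (W ω) ^ 2)
        have hlt : ¬ (C₀ / 2 ≤ (W ω) ^ 2) := hω
        rw [hf, h0]; push_neg at hlt; linarith
    have haddf : Integrable (fun ω => f ω + C₀ / 2) μ := hfint.add (integrable_const _)
    have h := integral_mono hintW2 haddf hpt
    rw [integral_add hfint (integrable_const _)] at h
    simp only [integral_const, measure_univ, probReal_univ, ENNReal.toReal_one, smul_eq_mul, one_mul] at h
    linarith
  -- Cauchy-Schwarz
  set p : ℝ := (μ A).toReal with hp
  have hpnonneg : 0 ≤ p := ENNReal.toReal_nonneg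
  have hCS : ∫ ω, f ω ∂μ ≤ Real.sqrt (∫ ω, (W ω) ^ 4 ∂μ) * Real.sqrt p := by
    set g : Ω → ℝ := A.indicator (fun _ => 1) with hg
    have hfg : ∀ ω, f ω = (W ω) ^ 2 * g ω := by
      intro ω
      by_cases hω : ω ∈ A <;> simp [hf, hg, Set.indicator_of_mem, Set.indicator_of_notMem, hω]
    have hconj : (2:ℝ).HolderConjugate 2 := by rw [Real.holderConjugate_iff]; constructor <;> norm_num
    have hmemf : MemLp (fun ω => (W ω) ^ 2) (ENNReal.ofReal 2) μ := by
      rw [show ENNReal.ofReal 2 = 2 by norm_num]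
      rw [memLp_two_iff_integrable_sq ((hmeas.pow_const 2).aestronglyMeasurable)]
      have h : (fun ω => ((W ω) ^ 2) ^ 2) = fun ω => (W ω) ^ 4 := by ext ω; ring
      rw [h]; exact hintW4
    have hmemg : MemLp g (ENNReal.ofReal 2) μ := by
      refine MemLp.of_bound ((measurable_const.indicator hAmeas).aestronglyMeasurable) 1 ?_
      filter_upwards with ω
      by_cases hω : ω ∈ A <;>
        simp [hg, Set.indicator_of_mem, Set.indicator_of_notMem, hω]
    have hCS0 := integral_mul_le_Lp_mul_Lq_of_nonneg hconj
      (Filter.Eventually.of_forall fun ω => sq_nonneg (W ω))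
      (Filter.Eventually.of_forall fun ω => by
        by_cases hω : ω ∈ A <;>
          simp [hg, Set.indicator_of_mem, Set.indicator_of_notMem, hω])
      hmemf hmemg
    have eq1 : ∫ ω, f ω ∂μ = ∫ ω, (W ω) ^ 2 * g ω ∂μ := by
      congr 1; ext ω; exact hfg ω
    have eq2 : ∫ ω, ((W ω) ^ 2) ^ (2:ℝ) ∂μ = ∫ ω, (W ω) ^ 4 ∂μ := by
      congr 1; ext ω
      rw [show (2:ℝ) = ((2:ℕ):ℝ) by norm_num, Real.rpow_natCast]; ring
    have eq3 : ∫ ω, (g ω) ^ (2:ℝ) ∂μ = p := by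
      have h : ∀ ω, (g ω) ^ (2:ℝ) = g ω := by
        intro ω
        by_cases hω : ω ∈ A <;>
          simp [hg, Set.indicator_of_mem, Set.indicator_of_notMem, hω]
      calc ∫ ω, (g ω) ^ (2:ℝ) ∂μ = ∫ ω, g ω ∂μ := by congr 1; ext ω; exact h ω
        _ = p := by rw [hg, integral_indicator hAmeas]; simp [hp, Measure.real]
    rw [eq1]
    rw [eq2, eq3] at hCS0
    calc ∫ ω, (W ω) ^ 2 * g ω ∂μ
        ≤ (∫ ω, (W ω) ^ 4 ∂μ) ^ ((1:ℝ)/2) * p ^ ((1:ℝ)/2) := hCS0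
      _ = Real.sqrt (∫ ω, (W ω) ^ 4 ∂μ) * Real.sqrt p := by
          rw [← Real.sqrt_eq_rpow, ← Real.sqrt_eq_rpow]
  -- conclude
  have hsqrtE : Real.sqrt (∫ ω, (W ω) ^ 4 ∂μ) ≤ 2 * C₀ * Real.sqrt E := by
    calc Real.sqrt (∫ ω, (W ω) ^ 4 ∂μ) ≤ Real.sqrt (4 * C₀ ^ 2 * E) := Real.sqrt_le_sqrt hEW4
      _ = 2 * C₀ * Real.sqrt E := by
          rw [show 4 * C₀ ^ 2 * E = (2 * C₀) ^ 2 * E by ring,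
            Real.sqrt_mul (by positivity), Real.sqrt_sq (by positivity)]
  have hmain : C₀ / 2 ≤ 2 * C₀ * Real.sqrt E * Real.sqrt p := by
    calc C₀ / 2 ≤ ∫ ω, f ω ∂μ := hlow
      _ ≤ Real.sqrt (∫ ω, (W ω) ^ 4 ∂μ) * Real.sqrt p := hCS
      _ ≤ 2 * C₀ * Real.sqrt E * Real.sqrt p :=
          mul_le_mul_of_nonneg_right hsqrtE (Real.sqrt_nonneg _)
  have hsE : Real.sqrt E ^ 2 = E := Real.sq_sqrt hEpos.le
  have hsp : Real.sqrt p ^ 2 = p := Real.sq_sqrt hpnonneg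
  have hsEnn : 0 ≤ Real.sqrt E := Real.sqrt_nonneg _
  have hspnn : 0 ≤ Real.sqrt p := Real.sqrt_nonneg _
  have h1 : 1 ≤ 4 * Real.sqrt E * Real.sqrt p := by nlinarith
  have hfin : 1 / (16 * E) ≤ p := by
    rw [div_le_iff₀ (by positivity)]
    nlinarith [mul_nonneg hsEnn hspnn]
  exact ENNReal.ofReal_le_of_le_toReal hfin
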